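/- Let p ∈ (0,1) and x > 0, and set A = exp(H_p(x) - γ), where H_p(x) = ∫_0^1 (1 - (1-p+pt)^x)/(1-t) dt. Then A/p - 1/2 ≥ x ≥ A - 1. -/

import Mathlib

open Real MeasureTheory Filter Finset

noncomputable def Hp (p x : ℝ) : ℝ := ∫ t in (0:ℝ)..1, (1 - (1 - p + p * t) ^ x) / (1 - t)

noncomputable def hpf (x u : ℝ) : ℝ := (1 - u ^ x) / (1 - u)

lemma hpf_nonneg {x : ℝ} (hx : 0 < x) {u : ℝ} (h0 : 0 ≤ u) (h1 : u ≤ 1) :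
    0 ≤ hpf x u := by
  rcases eq_or_lt_of_le h1 with h | h
  · simp [hpf, h]
  · apply div_nonneg _ (by linarith)
    have := Real.rpow_le_one h0 h1 hx.le
    linarith

lemma hpf_le_max {x : ℝ} (hx : 0 < x) {u : ℝ} (h0 : 0 ≤ u) (h1 : u ≤ 1) :
    hpf x u ≤ max 1 x := by
  rcases eq_or_lt_of_le h1 with h | h
  · simp [hpf, h]
  · rw [hpf, div_le_iff₀ (by linarith)]
    rcases le_total x 1 with hx1 | hx1
    · have hux : u ≤ u ^ x := by
        rcases eq_or_lt_of_le h0 with h0' | h0'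
        · rw [← h0']; positivity
        · calc u = u ^ (1:ℝ) := (Real.rpow_one u).symm
            _ ≤ u ^ x := Real.rpow_le_rpow_of_exponent_ge h0' h1 hx1
      have : (1:ℝ) ≤ max 1 x := le_max_left 1 x
      nlinarith
    · have hb : 1 + x * (u - 1) ≤ (1 + (u - 1)) ^ x :=
        one_add_mul_self_le_rpow_one_add (by linarith) hx1
      have : (1 + (u - 1)) = u := by ring
      rw [this] at hb
      have : x ≤ max 1 x := le_max_right 1 x
      nlinarith

lemma hpf_measurable (x : ℝ) : Measurable (hpf x) := by
  unfold hpf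
  exact (measurable_const.sub (measurable_id.pow_const x)).div
    (measurable_const.sub measurable_id)

lemma hpf_intervalIntegrable {x : ℝ} (hx : 0 < x) {a b : ℝ} (ha : 0 ≤ a) (hb : b ≤ 1)
    (hab : a ≤ b) : IntervalIntegrable (hpf x) volume a b := by
  apply IntervalIntegrable.mono_fun' (g := fun _ => max 1 x)
  · exact intervalIntegrable_const
  · exact ((hpf_measurable x).aestronglyMeasurable).restrict
  · rw [Filter.EventuallyLE, ae_restrict_iff' measurableSet_uIoc]
    filter_upwards with u hu
    rw [Set.uIoc_of_le hab] at hu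
    rw [Real.norm_eq_abs, abs_of_nonneg (hpf_nonneg hx (le_trans ha hu.1.le) (hu.2.trans hb))]
    exact hpf_le_max hx (le_trans ha hu.1.le) (hu.2.trans hb)

lemma hpf_mul_intervalIntegrable {x : ℝ} (hx : 0 < x) (n : ℕ) :
    IntervalIntegrable (fun u => u ^ n * hpf x u) volume 0 1 := by
  apply IntervalIntegrable.mono_fun' (g := fun _ => max 1 x)
  · exact intervalIntegrable_const
  · exact ((measurable_id.pow_const n).mul (hpf_measurable x)).aestronglyMeasurable.restrict
  · rw [Filter.EventuallyLE, ae_restrict_iff' measurableSet_uIoc]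
    filter_upwards with u hu
    rw [Set.uIoc_of_le zero_le_one] at hu
    have h0 := hu.1.le
    have h1 := hu.2
    have hf0 := hpf_nonneg hx h0 h1
    have hfm := hpf_le_max hx h0 h1
    have hun : u ^ n ≤ 1 := pow_le_one₀ h0 h1
    have : (0:ℝ) ≤ u ^ n := pow_nonneg h0 n
    rw [Real.norm_eq_abs, abs_of_nonneg (mul_nonneg this hf0)]
    calc u ^ n * hpf x u ≤ 1 * max 1 x := by
          apply mul_le_mul hun hfm hf0 zero_le_one
      _ = max 1 x := one_mul _

lemma rpow_mul_pow_eqOn {x : ℝ} (hx : 0 < x) (k : ℕ) :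
    Set.EqOn (fun u : ℝ => u ^ x * u ^ k) (fun u : ℝ => u ^ (x + k)) (Set.uIcc 0 1) := by
  intro u hu
  rw [Set.uIcc_of_le zero_le_one] at hu
  rcases eq_or_lt_of_le hu.1 with h0 | h0
  · have hxk : x + (k:ℝ) ≠ 0 := by positivity
    simp [← h0, Real.zero_rpow hx.ne', Real.zero_rpow hxk]
  · simp only
    rw [← Real.rpow_natCast u k, ← Real.rpow_add h0]

lemma rpow_mul_pow_intInt {x : ℝ} (hx : 0 < x) (k : ℕ) :
    IntervalIntegrable (fun u : ℝ => u ^ x * u ^ k) MeasureTheory.volume 0 1 := by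
  apply ContinuousOn.intervalIntegrable
  exact (continuousOn_id.rpow_const (fun u _ => Or.inr hx.le)).mul
    (continuous_pow k).continuousOn

lemma term_integral {x : ℝ} (hx : 0 < x) (k : ℕ) :
    ∫ u in (0:ℝ)..1, (u ^ k - u ^ x * u ^ k) = 1 / (k + 1) - 1 / (x + k + 1) := by
  rw [intervalIntegral.integral_sub (intervalIntegral.intervalIntegrable_pow k) (rpow_mul_pow_intInt hx k),
    integral_pow, intervalIntegral.integral_congr (rpow_mul_pow_eqOn hx k),
    integral_rpow (Or.inl (by have hk : (0:ℝ) ≤ k := Nat.cast_nonneg k; linarith : (-1:ℝ) < x + k))]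
  have hxk : x + (k:ℝ) + 1 ≠ 0 := by positivity
  rw [Real.one_rpow, Real.zero_rpow hxk]
  push_cast
  field_simp
  rw [one_pow, zero_pow (Nat.succ_ne_zero k)]
  ring

lemma hpf_decomp_ptwise {x : ℝ} (hx : 0 < x) (n : ℕ) :
    Set.EqOn (hpf x) (fun u => (∑ k ∈ Finset.range n, (u ^ k - u ^ x * u ^ k))
      + u ^ n * hpf x u) (Set.uIcc 0 1) := by
  intro u hu
  rw [Set.uIcc_of_le zero_le_one] at hu
  rcases eq_or_lt_of_le hu.2 with h1 | h1
  · simp [hpf, h1]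
  · have hne : u ≠ 1 := h1.ne
    have hden : 1 - u ≠ 0 := by intro h; apply hne; linarith
    have hden' : u - 1 ≠ 0 := by intro h; apply hne; linarith
    simp only [hpf]
    rw [show (∑ k ∈ Finset.range n, (u ^ k - u ^ x * u ^ k))
        = (1 - u ^ x) * ∑ k ∈ Finset.range n, u ^ k by
      rw [Finset.mul_sum]; exact Finset.sum_congr rfl (fun k _ => by ring),
      geom_sum_eq hne]
    field_simp
    ring

lemma hpf_decomp {x : ℝ} (hx : 0 < x) (n : ℕ) :
    ∫ u in (0:ℝ)..1, hpf x u
      = (∑ k ∈ Finset.range n, (1 / ((k:ℝ) + 1) - 1 / (x + k + 1)))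
        + ∫ u in (0:ℝ)..1, u ^ n * hpf x u := by
  have hterm : ∀ k : ℕ, IntervalIntegrable (fun u : ℝ => u ^ k - u ^ x * u ^ k)
      MeasureTheory.volume 0 1 :=
    fun k => (intervalIntegral.intervalIntegrable_pow k).sub (rpow_mul_pow_intInt hx k)
  have hA : IntervalIntegrable (fun u : ℝ => ∑ k ∈ Finset.range n, (u ^ k - u ^ x * u ^ k))
      MeasureTheory.volume 0 1 := by
    have := IntervalIntegrable.sum (μ := MeasureTheory.volume) (a := (0:ℝ)) (b := (1:ℝ))
      (Finset.range n) (f := fun k => fun u : ℝ => u ^ k - u ^ x * u ^ k)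
      (fun k _ => hterm k)
    convert this using 1
    · rfl
    ext u
    simp
  calc ∫ u in (0:ℝ)..1, hpf x u
      = ∫ u in (0:ℝ)..1, ((∑ k ∈ Finset.range n, (u ^ k - u ^ x * u ^ k))
          + u ^ n * hpf x u) := intervalIntegral.integral_congr (hpf_decomp_ptwise hx n)
    _ = (∫ u in (0:ℝ)..1, ∑ k ∈ Finset.range n, (u ^ k - u ^ x * u ^ k))
          + ∫ u in (0:ℝ)..1, u ^ n * hpf x u :=
        intervalIntegral.integral_add hA (hpf_mul_intervalIntegrable hx n)
    _ = (∑ k ∈ Finset.range n, (1 / ((k:ℝ) + 1) - 1 / (x + k + 1)))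
          + ∫ u in (0:ℝ)..1, u ^ n * hpf x u := by
        rw [intervalIntegral.integral_finset_sum (fun k _ => hterm k)]
        congr 1
        exact Finset.sum_congr rfl (fun k _ => term_integral hx k)

lemma log_diff_le_inv {t : ℝ} (ht : 0 < t) : Real.log (t + 1) - Real.log t ≤ 1 / t := by
  have h := Real.log_le_sub_one_of_pos (show 0 < (t+1)/t by positivity)
  rw [Real.log_div (by positivity) ht.ne'] at h
  have : (t + 1) / t - 1 = 1 / t := by field_simp; ring
  linarith

lemma inv_le_log_diff {t : ℝ} (ht : 1/2 < t) :
    1 / t ≤ Real.log (t + 1/2) - Real.log (t - 1/2) := by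
  have ha : 0 < t - 1/2 := by linarith
  have hb : 0 < t + 1/2 := by linarith
  have ht0 : 0 < t := by linarith
  have hlog : Real.log (t + 1/2) - Real.log (t - 1/2) = ∫ u in (t - 1/2)..(t + 1/2), u⁻¹ := by
    rw [integral_inv_of_pos ha hb, Real.log_div hb.ne' ha.ne']
  have hpoly : (∫ u in (t - 1/2)..(t + 1/2), (2/t - u/t^2)) = 1/t := by
    rw [intervalIntegral.integral_sub intervalIntegrable_const
      (by apply IntervalIntegrable.div_const; exact intervalIntegral.intervalIntegrable_id),
      intervalIntegral.integral_const]
    have : (∫ u in (t - 1/2)..(t + 1/2), u / t ^ 2)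
        = (∫ u in (t - 1/2)..(t + 1/2), u) / t ^ 2 := by
      rw [intervalIntegral.integral_div]
    rw [this, integral_id]
    have h2 : t + 1/2 - (t - 1/2) = 1 := by ring
    rw [h2, one_smul]
    field_simp
    ring
  rw [hlog, ← hpoly]
  apply intervalIntegral.integral_mono_on (by linarith)
  · exact (intervalIntegrable_const.sub
      ((intervalIntegral.intervalIntegrable_id).div_const _))
  · apply ContinuousOn.intervalIntegrable
    apply ContinuousOn.inv₀ continuousOn_id
    intro u hu
    rw [Set.uIcc_of_le (by linarith)] at hu
    have : 0 < u := lt_of_lt_of_le ha hu.1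
    exact this.ne'
  · intro u hu
    have hu0 : 0 < u := lt_of_lt_of_le ha hu.1
    have key : u⁻¹ - (2/t - u/t^2) = (t - u)^2 / (u * t^2) := by
      field_simp
      ring
    have : 0 ≤ (t - u)^2 / (u * t^2) := by positivity
    linarith

lemma Tsum_ge {x : ℝ} (hx : 0 < x) (n : ℕ) :
    Real.log (x + n + 1) - Real.log (x + 1)
      ≤ ∑ k ∈ Finset.range n, 1 / (x + k + 1) := by
  have htel := Finset.sum_range_sub (fun k : ℕ => Real.log (x + k + 1)) n
  simp only [Nat.cast_zero, add_zero] at htel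
  rw [← htel]
  apply Finset.sum_le_sum
  intro k _
  have h := log_diff_le_inv (show (0:ℝ) < x + k + 1 by positivity)
  have hc : x + (k:ℝ) + 1 + 1 = x + ((k:ℕ):ℝ) + 1 + 1 := rfl
  push_cast
  calc Real.log (x + ((k:ℝ) + 1) + 1) - Real.log (x + k + 1)
        = Real.log ((x + k + 1) + 1) - Real.log (x + k + 1) := by ring_nf
    _ ≤ 1 / (x + k + 1) := h

lemma Tsum_le {x : ℝ} (hx : 0 < x) (n : ℕ) :
    (∑ k ∈ Finset.range n, 1 / (x + k + 1))
      ≤ Real.log (x + n + 1/2) - Real.log (x + 1/2) := by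
  have htel := Finset.sum_range_sub (fun k : ℕ => Real.log (x + k + 1/2)) n
  simp only [Nat.cast_zero, add_zero] at htel
  rw [← htel]
  apply Finset.sum_le_sum
  intro k _
  have h := inv_le_log_diff (show (1:ℝ)/2 < x + k + 1 by have : (0:ℝ) ≤ k := Nat.cast_nonneg k; linarith)
  push_cast
  calc 1 / (x + k + 1) ≤ Real.log (x + k + 1 + 1/2) - Real.log (x + k + 1 - 1/2) := h
    _ = Real.log (x + ((k:ℝ) + 1) + 1/2) - Real.log (x + k + 1/2) := by ring_nf

lemma harmonic_real (n : ℕ) : ((harmonic n : ℚ) : ℝ) = ∑ k ∈ Finset.range n, 1 / ((k:ℝ) + 1) := by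
  rw [harmonic]
  push_cast
  simp [one_div]

lemma Rn_nonneg {x : ℝ} (hx : 0 < x) (n : ℕ) :
    0 ≤ ∫ u in (0:ℝ)..1, u ^ n * hpf x u := by
  apply intervalIntegral.integral_nonneg zero_le_one
  intro u hu
  exact mul_nonneg (pow_nonneg hu.1 n) (hpf_nonneg hx hu.1 hu.2)

lemma Rn_le {x : ℝ} (hx : 0 < x) (n : ℕ) :
    (∫ u in (0:ℝ)..1, u ^ n * hpf x u) ≤ max 1 x / (n + 1) := by
  have h1 : (∫ u in (0:ℝ)..1, u ^ n * max 1 x) = max 1 x / (n + 1) := by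
    rw [intervalIntegral.integral_mul_const, integral_pow]
    simp
    ring
  rw [← h1]
  apply intervalIntegral.integral_mono_on zero_le_one (hpf_mul_intervalIntegrable hx n)
    ((intervalIntegral.intervalIntegrable_pow n).mul_const _)
  intro u hu
  exact mul_le_mul_of_nonneg_left (hpf_le_max hx hu.1 hu.2) (pow_nonneg hu.1 n)

lemma F_bounds {x : ℝ} (hx : 0 < x) :
    Real.eulerMascheroniConstant + Real.log (x + 1/2) ≤ (∫ u in (0:ℝ)..1, hpf x u) ∧
    (∫ u in (0:ℝ)..1, hpf x u) ≤ Real.eulerMascheroniConstant + Real.log (x + 1) := by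
  set F := ∫ u in (0:ℝ)..1, hpf x u with hF
  set γ := Real.eulerMascheroniConstant with hγ
  set R : ℕ → ℝ := fun n => ∫ u in (0:ℝ)..1, u ^ n * hpf x u with hR
  have hR0 : Filter.Tendsto R Filter.atTop (nhds 0) := by
    apply squeeze_zero (fun n => Rn_nonneg hx n) (fun n => Rn_le hx n)
    have h := (tendsto_const_div_atTop_nhds_zero_nat (max 1 x)).comp
      (Filter.tendsto_add_atTop_nat 1)
    convert h using 2 with n
    simp [Function.comp]
  have hseq_eq : ∀ n : ℕ, F - R n - Real.eulerMascheroniSeq n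
      = Real.log (n + 1) - ∑ k ∈ Finset.range n, 1 / (x + k + 1) := by
    intro n
    have hd := hpf_decomp hx n
    have h2 : F - R n = ∑ k ∈ Finset.range n, (1 / ((k:ℝ) + 1) - 1 / (x + k + 1)) := by
      rw [hF, hd]; ring
    rw [h2, Finset.sum_sub_distrib, Real.eulerMascheroniSeq, ← harmonic_real n]
    ring
  have htend : Filter.Tendsto (fun n => F - R n - Real.eulerMascheroniSeq n)
      Filter.atTop (nhds (F - 0 - γ)) :=
    (tendsto_const_nhds.sub hR0).sub Real.tendsto_eulerMascheroniSeq
  constructor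
  · -- lower bound
    set δ : ℕ → ℝ := fun n => Real.log (x + n + 1/2) - Real.log (n + 1) with hδ
    have hδ0 : Filter.Tendsto δ Filter.atTop (nhds 0) := by
      have hq : Filter.Tendsto (fun n : ℕ => 1 + (x - 1/2) / ((n:ℝ) + 1))
          Filter.atTop (nhds 1) := by
        have h := (tendsto_const_div_atTop_nhds_zero_nat (x - 1/2)).comp
          (Filter.tendsto_add_atTop_nat 1)
        have h' : Filter.Tendsto (fun n : ℕ => (x - 1/2) / ((n:ℝ) + 1))
            Filter.atTop (nhds 0) := by
          convert h using 2 with n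
          simp [Function.comp]
        simpa using tendsto_const_nhds.add h'
      have hcomp := (Real.continuousAt_log one_ne_zero).tendsto.comp hq
      rw [Real.log_one] at hcomp
      apply hcomp.congr
      intro n
      have hn1 : (0:ℝ) < (n:ℝ) + 1 := by positivity
      have : 1 + (x - 1/2) / ((n:ℝ) + 1) = (x + n + 1/2) / ((n:ℝ) + 1) := by
        field_simp; ring
      simp only [Function.comp, this, hδ]
      rw [Real.log_div (by positivity) hn1.ne']
    have hper : ∀ n : ℕ, Real.log (x + 1/2) ≤ (F - R n - Real.eulerMascheroniSeq n) + δ n := by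
      intro n
      rw [hseq_eq n]
      have := Tsum_le hx n
      simp only [hδ]
      linarith
    have := ge_of_tendsto (htend.add hδ0) (Filter.Eventually.of_forall hper)
    simp only [sub_zero, add_zero] at this
    linarith
  · -- upper bound
    have hper : ∀ n : ℕ, F - R n - Real.eulerMascheroniSeq n ≤ Real.log (x + 1) := by
      intro n
      rw [hseq_eq n]
      have h1 := Tsum_ge hx n
      have h2 : Real.log ((n:ℝ) + 1) ≤ Real.log (x + n + 1) := by
        rw [Real.log_le_log_iff (by positivity) (by positivity)]
        linarith
      linarith
    have := le_of_tendsto htend (Filter.Eventually.of_forall hper)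
    simp only [sub_zero] at this
    linarith

lemma Hp_eq_integral {p x : ℝ} (hp : p ∈ Set.Ioo (0:ℝ) 1) (hx : 0 < x) :
    Hp p x = ∫ u in (1-p)..1, hpf x u := by
  obtain ⟨hp0, hp1⟩ := hp
  have hptw : ∀ t : ℝ, (1 - (1 - p + p * t) ^ x) / (1 - t) = p * hpf x (p * t + (1 - p)) := by
    intro t
    rcases eq_or_ne t 1 with rfl | ht
    · simp [hpf]
    · have h1t : 1 - t ≠ 0 := by intro h; apply ht; linarith
      have harg : p * t + (1 - p) = 1 - p + p * t := by ring
      rw [harg, hpf]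
      have hden : 1 - (1 - p + p * t) = p * (1 - t) := by ring
      rw [hden]
      field_simp
  have h1 : Hp p x = ∫ t in (0:ℝ)..1, p * hpf x (p * t + (1 - p)) := by
    rw [Hp]
    exact intervalIntegral.integral_congr (fun t _ => hptw t)
  rw [h1, intervalIntegral.integral_const_mul,
    intervalIntegral.integral_comp_mul_add (hpf x) hp0.ne' (1 - p)]
  simp only [mul_zero, zero_add, mul_one, smul_eq_mul]
  rw [← mul_assoc, mul_inv_cancel₀ hp0.ne', one_mul]
  norm_num

lemma head_integral_bounds {p x : ℝ} (hp : p ∈ Set.Ioo (0:ℝ) 1) (hx : 0 < x) :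
    0 ≤ (∫ u in (0:ℝ)..(1-p), hpf x u) ∧
      (∫ u in (0:ℝ)..(1-p), hpf x u) ≤ -Real.log p := by
  obtain ⟨hp0, hp1⟩ := hp
  have h1p : 0 ≤ 1 - p := by linarith
  constructor
  · exact intervalIntegral.integral_nonneg h1p
      (fun u hu => hpf_nonneg hx hu.1 (by linarith [hu.2]))
  · have hlog : (∫ u in (0:ℝ)..(1-p), (1 - u)⁻¹) = -Real.log p := by
      rw [intervalIntegral.integral_comp_sub_left (fun u => u⁻¹) 1]
      norm_num
      rw [integral_inv_of_pos hp0 one_pos, Real.log_div one_ne_zero hp0.ne']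
      simp
    rw [← hlog]
    apply intervalIntegral.integral_mono_on h1p
      (hpf_intervalIntegrable hx le_rfl (by linarith) h1p)
    · apply ContinuousOn.intervalIntegrable
      apply ContinuousOn.inv₀ (by fun_prop)
      intro u hu
      rw [Set.uIcc_of_le h1p] at hu
      have : u ≤ 1 - p := hu.2
      intro h; nlinarith
    · intro u hu
      have hu1 : u ≤ 1 - p := hu.2
      have hden : 0 < 1 - u := by linarith
      rw [hpf, div_le_iff₀ hden, inv_mul_cancel₀ hden.ne']
      have : 0 ≤ u ^ x := Real.rpow_nonneg hu.1 x
      linarith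

theorem Hp_inverse_bounds (p x : ℝ) (hp : p ∈ Set.Ioo (0:ℝ) 1) (hx : 0 < x) :
    letI A := Real.exp (Hp p x - Real.eulerMascheroniConstant)
    A - 1 ≤ x ∧ x ≤ A / p - 1/2 := by
  obtain ⟨hp0, hp1⟩ := hp
  show Real.exp (Hp p x - Real.eulerMascheroniConstant) - 1 ≤ x ∧
    x ≤ Real.exp (Hp p x - Real.eulerMascheroniConstant) / p - 1/2
  have hsplit : (∫ u in (0:ℝ)..(1-p), hpf x u) + (∫ u in (1-p:ℝ)..1, hpf x u)
      = ∫ u in (0:ℝ)..1, hpf x u :=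
    intervalIntegral.integral_add_adjacent_intervals
      (hpf_intervalIntegrable hx le_rfl (by linarith) (by linarith))
      (hpf_intervalIntegrable hx (by linarith) le_rfl (by linarith))
  have hHp : Hp p x = (∫ u in (0:ℝ)..1, hpf x u) - ∫ u in (0:ℝ)..(1-p), hpf x u := by
    rw [Hp_eq_integral ⟨hp0, hp1⟩ hx]; linarith
  obtain ⟨hE0, hE1⟩ := head_integral_bounds ⟨hp0, hp1⟩ hx
  obtain ⟨hF1, hF2⟩ := F_bounds hx
  set γ := Real.eulerMascheroniConstant with hγ
  constructor
  · have h : Hp p x - γ ≤ Real.log (x + 1) := by rw [hHp]; linarith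
    have h2 := Real.exp_le_exp.mpr h
    rw [Real.exp_log (by linarith)] at h2
    linarith
  · have h : Real.log (p * (x + 1/2)) ≤ Hp p x - γ := by
      rw [Real.log_mul hp0.ne' (by linarith), hHp]
      linarith
    have h2 := Real.exp_le_exp.mpr h
    rw [Real.exp_log (by positivity : (0:ℝ) < p * (x + 1/2))] at h2
    have h3 : x + 1/2 ≤ Real.exp (Hp p x - γ) / p := by
      rw [le_div_iff₀ hp0]
      linarith [mul_comm p (x + 1/2)]
    linarith
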